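/- For any ε > 0 there exists δ = δ(ε) > 0 such that any two δ-close partitions P and Q of the vertex set of a Σ-colored graph G satisfy |ind(P) − ind(Q)| ≤ ε. In fact one may take δ = Θ(ε²). -/
import Mathlib


open Finset

noncomputable def dens {V C : Type*} [DecidableEq V] [DecidableEq C]
    (c : V → V → C) (σ : C) (A B : Finset V) : ℝ :=
  (((A ×ˢ B).filter (fun p => c p.1 p.2 = σ)).card : ℝ) / ((A.card : ℝ) * (B.card : ℝ))

noncomputable def indPair {V C : Type*} [DecidableEq V] [Fintype C] [DecidableEq C]
    (c : V → V → C) (A B : Finset V) : ℝ :=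
  ∑ σ : C, (dens c σ A B) ^ 2

noncomputable def indPart {V C : Type*} [Fintype V] [DecidableEq V] [Fintype C] [DecidableEq C]
    (c : V → V → C) {k : ℕ} (P : Fin k → Finset V) : ℝ :=
  ∑ p ∈ univ.filter (fun p : Fin k × Fin k => p.1 < p.2),
    (((P p.1).card : ℝ) * ((P p.2).card : ℝ) / ((Fintype.card V).choose 2 : ℝ))
      * indPair c (P p.1) (P p.2)

def IsPartition {V : Type*} [Fintype V] [DecidableEq V] {k : ℕ} (P : Fin k → Finset V) : Prop :=
  (∀ i j, i ≠ j → Disjoint (P i) (P j)) ∧ (∀ v : V, ∃ i, v ∈ P i)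

/-- An equipartition: all parts have sizes differing by at most 1. -/
def IsEquipartition' {V : Type*} {k : ℕ} (P : Fin k → Finset V) : Prop :=
  ∀ i j, (P i).card ≤ (P j).card + 1

def Refines {V : Type*} {k k' : ℕ} (P' : Fin k' → Finset V) (P : Fin k → Finset V) : Prop :=
  ∀ j, ∃ i, P' j ⊆ P i

/-- An equipartition `P` of size `k` is `(f, γ)`-robust if no refining equipartition of
size at most `f(k)` has index exceeding `ind(P) + γ`. -/
def IsRobust {V C : Type*} [Fintype V] [DecidableEq V] [Fintype C] [DecidableEq C]
    (c : V → V → C) (f : ℕ → ℕ) (γ : ℝ) {k : ℕ} (P : Fin k → Finset V) : Prop :=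
  ∀ (k' : ℕ) (P' : Fin k' → Finset V),
    IsPartition P' → IsEquipartition' P' → Refines P' P → k' ≤ f k →
    indPart c P' ≤ indPart c P + γ

/-- Padding: view a `Fin k`-indexed partition as an `ℕ`-indexed one with empty parts beyond `k`. -/
def padPart {V : Type*} {k : ℕ} (P : Fin k → Finset V) (i : ℕ) : Finset V :=
  if h : i < k then P ⟨i, h⟩ else ∅

/-- Two (padded) partitions are `δ`-close if they agree outside a set `T` of at most `δn`
vertices. -/
def DeltaClose {V : Type*} [Fintype V] [DecidableEq V] (δ : ℝ) {k l : ℕ}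
    (P : Fin k → Finset V) (Q : Fin l → Finset V) : Prop :=
  ∃ T : Finset V, (T.card : ℝ) ≤ δ * (Fintype.card V) ∧
    ∀ i : ℕ, padPart P i \ T = padPart Q i \ T

section lemmas
variable {V C : Type*} [DecidableEq V] [DecidableEq C] (c : V → V → C)

lemma div_le_div_right_nonneg {a b c : ℝ} (h : a ≤ b) (hc : 0 ≤ c) : a / c ≤ b / c := by
  rw [div_eq_mul_inv, div_eq_mul_inv]
  exact mul_le_mul_of_nonneg_right h (inv_nonneg.mpr hc)

lemma dens_nonneg (σ : C) (A B : Finset V) : 0 ≤ dens c σ A B :=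
  div_nonneg (Nat.cast_nonneg _) (by positivity)

lemma dens_le_one (σ : C) (A B : Finset V) : dens c σ A B ≤ 1 := by
  show (_ : ℝ) / _ ≤ 1
  rcases eq_or_lt_of_le (show (0:ℝ) ≤ (A.card:ℝ) * (B.card:ℝ) by positivity) with h | h
  · rw [← h, div_zero]; norm_num
  · rw [div_le_one h]
    calc ((((A ×ˢ B).filter (fun p => c p.1 p.2 = σ)).card : ℝ))
        ≤ ((A ×ˢ B).card : ℝ) := by exact_mod_cast card_filter_le _ _
      _ = (A.card : ℝ) * (B.card : ℝ) := by rw [card_product]; push_cast; ring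

lemma sum_dens_le_one [Fintype C] (A B : Finset V) : ∑ σ : C, dens c σ A B ≤ 1 := by
  show ∑ σ : C, (_ : ℝ) / _ ≤ 1
  rw [← sum_div]
  have h : ∑ σ : C, ((((A ×ˢ B).filter (fun p => c p.1 p.2 = σ)).card : ℝ))
      = ((A ×ˢ B).card : ℝ) := by
    rw [← Nat.cast_sum]
    exact_mod_cast
      congrArg (fun m : ℕ => (m:ℝ))
        (Finset.card_eq_sum_card_fiberwise (f := fun x : V × V => c x.1 x.2)
          (t := (univ : Finset C)) (fun x _ => mem_univ _)).symm
  rw [h, card_product]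
  push_cast
  exact div_self_le_one _

lemma indPair_nonneg [Fintype C] (A B : Finset V) : 0 ≤ indPair c A B :=
  Finset.sum_nonneg fun _ _ => sq_nonneg _

lemma indPair_le_one [Fintype C] (A B : Finset V) : indPair c A B ≤ 1 := by
  calc indPair c A B ≤ ∑ σ : C, dens c σ A B := by
        refine Finset.sum_le_sum fun σ _ => ?_
        have h1 := dens_nonneg c σ A B
        have h2 := dens_le_one c σ A B
        nlinarith
    _ ≤ 1 := sum_dens_le_one c A B

lemma abs_dens_sub (σ : C) {A B A' B' : Finset V} (hA : A' ⊆ A) (hB : B' ⊆ B)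
    (hA' : A'.Nonempty) (hB' : B'.Nonempty) :
    |dens c σ A B - dens c σ A' B'| ≤
      ((A.card:ℝ) * B.card - (A'.card:ℝ) * B'.card) / ((A.card:ℝ) * B.card) := by
  set e : ℝ := (((A ×ˢ B).filter (fun p => c p.1 p.2 = σ)).card : ℝ) with he_def
  set e' : ℝ := (((A' ×ˢ B').filter (fun p => c p.1 p.2 = σ)).card : ℝ) with he'_def
  have hd1 : dens c σ A B = e / ((A.card:ℝ) * (B.card:ℝ)) := rfl
  have hd2 : dens c σ A' B' = e' / ((A'.card:ℝ) * (B'.card:ℝ)) := rfl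
  have hsubP : A' ×ˢ B' ⊆ A ×ˢ B := product_subset_product hA hB
  have hfsub : (A' ×ˢ B').filter (fun p => c p.1 p.2 = σ) ⊆
      (A ×ˢ B).filter (fun p => c p.1 p.2 = σ) := filter_subset_filter _ hsubP
  have ha'pos : (0:ℝ) < (A'.card : ℝ) := by exact_mod_cast card_pos.mpr hA'
  have hb'pos : (0:ℝ) < (B'.card : ℝ) := by exact_mod_cast card_pos.mpr hB'
  have ha : (A'.card:ℝ) ≤ (A.card:ℝ) := by exact_mod_cast card_le_card hA
  have hb : (B'.card:ℝ) ≤ (B.card:ℝ) := by exact_mod_cast card_le_card hB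
  have ha'b' : (0:ℝ) < (A'.card:ℝ) * B'.card := by positivity
  have hab : (0:ℝ) < (A.card:ℝ) * B.card := by nlinarith
  have he'e : e' ≤ e := by
    rw [he_def, he'_def]; exact_mod_cast card_le_card hfsub
  have he'0 : (0:ℝ) ≤ e' := Nat.cast_nonneg _
  have he'ub : e' ≤ (A'.card:ℝ) * B'.card := by
    rw [he'_def]
    have h := card_filter_le (A' ×ˢ B') (fun p => c p.1 p.2 = σ)
    rw [card_product] at h
    exact_mod_cast h
  have hkey : e ≤ e' + ((A.card:ℝ) * B.card - (A'.card:ℝ) * B'.card) := by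
    have hnat : ((A ×ˢ B).filter (fun p => c p.1 p.2 = σ)).card + (A' ×ˢ B').card ≤
        ((A' ×ˢ B').filter (fun p => c p.1 p.2 = σ)).card + (A ×ˢ B).card := by
      have h1 : ((A ×ˢ B).filter (fun p => c p.1 p.2 = σ)) \
          ((A' ×ˢ B').filter (fun p => c p.1 p.2 = σ)) ⊆ (A ×ˢ B) \ (A' ×ˢ B') := by
        intro x hx
        simp only [mem_sdiff, mem_filter] at hx ⊢
        exact ⟨hx.1.1, fun hx' => hx.2 ⟨hx', hx.1.2⟩⟩
      have e1 := Finset.card_sdiff_add_card_eq_card hfsub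
      have e2 := Finset.card_sdiff_add_card_eq_card hsubP
      have e3 := card_le_card h1
      omega
    have := (Nat.cast_le (α := ℝ)).mpr hnat
    push_cast at this
    rw [card_product, card_product] at this
    push_cast at this
    rw [he_def, he'_def]
    push_cast
    linarith
  have main1 : e * ((A'.card:ℝ) * B'.card) - e' * ((A.card:ℝ) * B.card) ≤
      ((A.card:ℝ) * B.card - (A'.card:ℝ) * B'.card) * ((A'.card:ℝ) * B'.card) := by
    nlinarith
  have main2 : e' * ((A.card:ℝ) * B.card) - e * ((A'.card:ℝ) * B'.card) ≤
      ((A.card:ℝ) * B.card - (A'.card:ℝ) * B'.card) * ((A'.card:ℝ) * B'.card) := by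
    nlinarith
  rw [hd1, hd2, abs_sub_le_iff]
  constructor
  · rw [div_sub_div _ _ (ne_of_gt hab) (ne_of_gt ha'b'),
      div_le_div_iff₀ (by positivity) hab]
    nlinarith [mul_le_mul_of_nonneg_right main1 hab.le]
  · rw [div_sub_div _ _ (ne_of_gt ha'b') (ne_of_gt hab),
      div_le_div_iff₀ (by positivity) hab]
    nlinarith [mul_le_mul_of_nonneg_right main2 hab.le]

lemma abs_indPair_sub [Fintype C] {A B A' B' : Finset V} (hA : A' ⊆ A) (hB : B' ⊆ B)
    (hA' : A'.Nonempty) (hB' : B'.Nonempty) :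
    |indPair c A B - indPair c A' B'| ≤
      2 * (((A.card:ℝ) * B.card - (A'.card:ℝ) * B'.card) / ((A.card:ℝ) * B.card)) := by
  set r : ℝ := ((A.card:ℝ) * B.card - (A'.card:ℝ) * B'.card) / ((A.card:ℝ) * B.card) with hr
  show |∑ σ : C, dens c σ A B ^ 2 - ∑ σ : C, dens c σ A' B' ^ 2| ≤ 2 * r
  rw [← Finset.sum_sub_distrib]
  calc |∑ σ : C, (dens c σ A B ^ 2 - dens c σ A' B' ^ 2)|
      ≤ ∑ σ : C, |dens c σ A B ^ 2 - dens c σ A' B' ^ 2| := Finset.abs_sum_le_sum_abs _ _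
    _ ≤ ∑ σ : C, r * (dens c σ A B + dens c σ A' B') := by
        refine Finset.sum_le_sum fun σ _ => ?_
        have h1 := abs_dens_sub c σ hA hB hA' hB'
        have h2 := dens_nonneg c σ A B
        have h3 := dens_nonneg c σ A' B'
        have heq : dens c σ A B ^ 2 - dens c σ A' B' ^ 2 =
            (dens c σ A B - dens c σ A' B') * (dens c σ A B + dens c σ A' B') := by ring
        rw [heq, abs_mul, abs_of_nonneg (by linarith : (0:ℝ) ≤ dens c σ A B + dens c σ A' B')]
        exact mul_le_mul_of_nonneg_right h1 (by linarith)
    _ = r * ((∑ σ : C, dens c σ A B) + (∑ σ : C, dens c σ A' B')) := by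
        rw [← Finset.mul_sum, Finset.sum_add_distrib]
    _ ≤ 2 * r := by
        have hr0 : 0 ≤ r := by
          apply div_nonneg _ (by positivity)
          have ha : (A'.card:ℝ) ≤ (A.card:ℝ) := by exact_mod_cast card_le_card hA
          have hb : (B'.card:ℝ) ≤ (B.card:ℝ) := by exact_mod_cast card_le_card hB
          have h1 : (0:ℝ) ≤ (A'.card:ℝ) := Nat.cast_nonneg _
          have h2 : (0:ℝ) ≤ (B'.card:ℝ) := Nat.cast_nonneg _
          nlinarith
        have h1 := sum_dens_le_one c A B
        have h2 := sum_dens_le_one c A' B'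
        have h3 : (0:ℝ) ≤ ∑ σ : C, dens c σ A B :=
          Finset.sum_nonneg fun σ _ => dens_nonneg c σ A B
        have h4 : (0:ℝ) ≤ ∑ σ : C, dens c σ A' B' :=
          Finset.sum_nonneg fun σ _ => dens_nonneg c σ A' B'
        nlinarith

lemma key_pair [Fintype C] {A B A' B' : Finset V} (hA : A' ⊆ A) (hB : B' ⊆ B) :
    |(A.card:ℝ) * B.card * indPair c A B - (A'.card:ℝ) * B'.card * indPair c A' B'| ≤
      3 * ((A.card:ℝ) * B.card - (A'.card:ℝ) * B'.card) := by
  have ha : (A'.card:ℝ) ≤ (A.card:ℝ) := by exact_mod_cast card_le_card hA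
  have hb : (B'.card:ℝ) ≤ (B.card:ℝ) := by exact_mod_cast card_le_card hB
  have ha0 : (0:ℝ) ≤ (A'.card:ℝ) := Nat.cast_nonneg _
  have hb0 : (0:ℝ) ≤ (B'.card:ℝ) := Nat.cast_nonneg _
  have hq0 := indPair_nonneg c A B
  have hq1 := indPair_le_one c A B
  have hq0' := indPair_nonneg c A' B'
  have hq1' := indPair_le_one c A' B'
  have hA0 : (0:ℝ) ≤ (A.card:ℝ) := Nat.cast_nonneg _
  have hB0 : (0:ℝ) ≤ (B.card:ℝ) := Nat.cast_nonneg _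
  rcases A'.eq_empty_or_nonempty with hAe | hA'
  · subst hAe
    simp only [card_empty, Nat.cast_zero, zero_mul, mul_zero, sub_zero]
    rw [abs_of_nonneg (by positivity)]
    nlinarith [mul_le_mul_of_nonneg_left hq1 (mul_nonneg hA0 hB0)]
  rcases B'.eq_empty_or_nonempty with hBe | hB'
  · subst hBe
    simp only [card_empty, Nat.cast_zero, mul_zero, zero_mul, sub_zero]
    rw [abs_of_nonneg (by positivity)]
    nlinarith [mul_le_mul_of_nonneg_left hq1 (mul_nonneg hA0 hB0)]
  · have ha'pos : (0:ℝ) < (A'.card : ℝ) := by exact_mod_cast card_pos.mpr hA'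
    have hb'pos : (0:ℝ) < (B'.card : ℝ) := by exact_mod_cast card_pos.mpr hB'
    have hab : (0:ℝ) < (A.card:ℝ) * B.card := by nlinarith
    have hd := abs_indPair_sub c hA hB hA' hB'
    have hsplit : (A.card:ℝ) * B.card * indPair c A B - (A'.card:ℝ) * B'.card * indPair c A' B'
        = ((A.card:ℝ) * B.card - (A'.card:ℝ) * B'.card) * indPair c A B
          + (A'.card:ℝ) * B'.card * (indPair c A B - indPair c A' B') := by ring
    rw [hsplit]
    have hD0 : (0:ℝ) ≤ (A.card:ℝ) * B.card - (A'.card:ℝ) * B'.card := by nlinarith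
    have hterm1 : |((A.card:ℝ) * B.card - (A'.card:ℝ) * B'.card) * indPair c A B|
        ≤ ((A.card:ℝ) * B.card - (A'.card:ℝ) * B'.card) := by
      rw [abs_mul, abs_of_nonneg hD0, abs_of_nonneg hq0]
      nlinarith
    have hterm2 : |(A'.card:ℝ) * B'.card * (indPair c A B - indPair c A' B')|
        ≤ 2 * ((A.card:ℝ) * B.card - (A'.card:ℝ) * B'.card) := by
      rw [abs_mul, abs_of_nonneg (by positivity : (0:ℝ) ≤ (A'.card:ℝ) * B'.card)]
      calc (A'.card:ℝ) * B'.card * |indPair c A B - indPair c A' B'|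
          ≤ (A'.card:ℝ) * B'.card * (2 * (((A.card:ℝ) * B.card - (A'.card:ℝ) * B'.card)
              / ((A.card:ℝ) * B.card))) := by
            apply mul_le_mul_of_nonneg_left hd (by positivity)
        _ = 2 * ((((A.card:ℝ) * B.card - (A'.card:ℝ) * B'.card) * ((A'.card:ℝ) * B'.card))
              / ((A.card:ℝ) * B.card)) := by ring
        _ ≤ 2 * ((A.card:ℝ) * B.card - (A'.card:ℝ) * B'.card) := by
            have hle : (((A.card:ℝ) * B.card - (A'.card:ℝ) * B'.card) * ((A'.card:ℝ) * B'.card))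
                / ((A.card:ℝ) * B.card) ≤ ((A.card:ℝ) * B.card - (A'.card:ℝ) * B'.card) := by
              rw [div_le_iff₀ hab]
              nlinarith
            linarith
    calc _ ≤ |((A.card:ℝ) * B.card - (A'.card:ℝ) * B'.card) * indPair c A B|
          + |(A'.card:ℝ) * B'.card * (indPair c A B - indPair c A' B')| := abs_add_le _ _
      _ ≤ 3 * ((A.card:ℝ) * B.card - (A'.card:ℝ) * B'.card) := by linarith

end lemmas

section partlemmas
variable {V C : Type*} [Fintype V] [DecidableEq V] [Fintype C] [DecidableEq C] (c : V → V → C)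

lemma sum_card_diff {k : ℕ} (P : Fin k → Finset V)
    (hdis : ∀ i j, i ≠ j → Disjoint (P i) (P j)) (T : Finset V) :
    ∑ p ∈ univ.filter (fun p : Fin k × Fin k => p.1 < p.2),
      (((P p.1).card:ℝ) * ((P p.2).card:ℝ) - ((P p.1 \ T).card:ℝ) * ((P p.2 \ T).card:ℝ))
      ≤ (T.card : ℝ) * (Fintype.card V) := by
  set t : Fin k → ℝ := fun i => ((P i ∩ T).card : ℝ) with ht
  set a : Fin k → ℝ := fun i => ((P i).card : ℝ) with ha
  have hsd : ∀ i, ((P i \ T).card : ℝ) = a i - t i := by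
    intro i
    have h := Finset.card_sdiff_add_card_inter (P i) T
    have h2 := congrArg (fun m : ℕ => (m : ℝ)) h
    push_cast at h2
    simp only [ha, ht]
    linarith
  have ht0 : ∀ i, 0 ≤ t i := fun i => Nat.cast_nonneg _
  have ha0 : ∀ i, 0 ≤ a i := fun i => Nat.cast_nonneg _
  have hta : ∀ i, t i ≤ a i := by
    intro i; simp only [ht, ha]
    exact_mod_cast card_le_card inter_subset_left
  have step1 : ∑ p ∈ univ.filter (fun p : Fin k × Fin k => p.1 < p.2),
      (((P p.1).card:ℝ) * ((P p.2).card:ℝ) - ((P p.1 \ T).card:ℝ) * ((P p.2 \ T).card:ℝ))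
      ≤ ∑ p ∈ univ.filter (fun p : Fin k × Fin k => p.1 < p.2),
        (t p.1 * a p.2 + t p.2 * a p.1) := by
    refine Finset.sum_le_sum fun p _ => ?_
    rw [hsd, hsd]
    have h1 := ht0 p.1; have h2 := ht0 p.2
    nlinarith [mul_nonneg (ht0 p.1) (ht0 p.2)]
  have step2 : ∑ p ∈ univ.filter (fun p : Fin k × Fin k => p.1 < p.2),
      (t p.1 * a p.2 + t p.2 * a p.1)
      ≤ ∑ p : Fin k × Fin k, t p.1 * a p.2 := by
    rw [Finset.sum_add_distrib]
    have hswap : ∑ p ∈ univ.filter (fun p : Fin k × Fin k => p.1 < p.2), t p.2 * a p.1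
        = ∑ p ∈ univ.filter (fun p : Fin k × Fin k => p.2 < p.1), t p.1 * a p.2 := by
      apply Finset.sum_nbij' (fun p => p.swap) (fun p => p.swap)
      · intro p hp; simp only [mem_filter, mem_univ, true_and] at hp ⊢; exact hp
      · intro p hp; simp only [mem_filter, mem_univ, true_and] at hp ⊢; exact hp
      · intro p _; rfl
      · intro p _; rfl
      · intro p _; rfl
    rw [hswap, ← Finset.sum_union]
    · apply Finset.sum_le_sum_of_subset_of_nonneg
      · exact fun p _ => mem_univ p
      · intro p _ _
        exact mul_nonneg (ht0 _) (ha0 _)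
    · rw [Finset.disjoint_filter]
      intro p _ h1 h2
      exact absurd h1 (lt_asymm h2)
  have step3 : ∑ p : Fin k × Fin k, t p.1 * a p.2 = (∑ i, t i) * (∑ j, a j) := by
    rw [Finset.sum_mul_sum, ← Finset.sum_product', Finset.univ_product_univ]
  have hT : ∑ i, t i ≤ (T.card : ℝ) := by
    have h : ∑ i, (P i ∩ T).card ≤ T.card := by
      rw [← Finset.card_biUnion
        (fun i _ j _ hij => (hdis i j hij).mono inter_subset_left inter_subset_left)]
      exact card_le_card (Finset.biUnion_subset.mpr fun i _ => inter_subset_right)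
    simp only [ht]
    exact_mod_cast h
  have hV : ∑ j, a j ≤ (Fintype.card V : ℝ) := by
    have h : ∑ i, (P i).card ≤ (univ : Finset V).card := by
      rw [← Finset.card_biUnion (fun i _ j _ hij => hdis i j hij)]
      exact card_le_card (Finset.biUnion_subset.mpr fun i _ => subset_univ _)
    rw [Finset.card_univ] at h
    simp only [ha]
    exact_mod_cast h
  calc _ ≤ ∑ p : Fin k × Fin k, t p.1 * a p.2 := le_trans step1 step2
    _ = (∑ i, t i) * (∑ j, a j) := step3
    _ ≤ (T.card : ℝ) * (Fintype.card V) :=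
        mul_le_mul hT hV (Finset.sum_nonneg fun i _ => ha0 i) (Nat.cast_nonneg _)

lemma indPart_sdiff {k : ℕ} (P : Fin k → Finset V)
    (hdis : ∀ i j, i ≠ j → Disjoint (P i) (P j)) (T : Finset V) :
    |indPart c P - indPart c (fun i => P i \ T)| ≤
      3 * ((T.card : ℝ) * (Fintype.card V)) / ((Fintype.card V).choose 2 : ℝ) := by
  set N : ℝ := ((Fintype.card V).choose 2 : ℝ) with hN
  have hN0 : (0:ℝ) ≤ N := Nat.cast_nonneg _
  show |∑ p ∈ univ.filter (fun p : Fin k × Fin k => p.1 < p.2),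
      (((P p.1).card : ℝ) * ((P p.2).card : ℝ) / N) * indPair c (P p.1) (P p.2)
    - ∑ p ∈ univ.filter (fun p : Fin k × Fin k => p.1 < p.2),
      (((P p.1 \ T).card : ℝ) * ((P p.2 \ T).card : ℝ) / N) * indPair c (P p.1 \ T) (P p.2 \ T)|
    ≤ 3 * ((T.card : ℝ) * (Fintype.card V)) / N
  rw [← Finset.sum_sub_distrib]
  calc _ ≤ ∑ p ∈ univ.filter (fun p : Fin k × Fin k => p.1 < p.2),
        |(((P p.1).card : ℝ) * ((P p.2).card : ℝ) / N) * indPair c (P p.1) (P p.2)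
          - (((P p.1 \ T).card : ℝ) * ((P p.2 \ T).card : ℝ) / N)
            * indPair c (P p.1 \ T) (P p.2 \ T)| := Finset.abs_sum_le_sum_abs _ _
    _ ≤ ∑ p ∈ univ.filter (fun p : Fin k × Fin k => p.1 < p.2),
        3 * (((P p.1).card:ℝ) * ((P p.2).card:ℝ)
          - ((P p.1 \ T).card:ℝ) * ((P p.2 \ T).card:ℝ)) / N := by
        refine Finset.sum_le_sum fun p _ => ?_
        have hkey := key_pair c (sdiff_subset : P p.1 \ T ⊆ P p.1)
          (sdiff_subset : P p.2 \ T ⊆ P p.2)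
        have heq : (((P p.1).card : ℝ) * ((P p.2).card : ℝ) / N) * indPair c (P p.1) (P p.2)
            - (((P p.1 \ T).card : ℝ) * ((P p.2 \ T).card : ℝ) / N)
              * indPair c (P p.1 \ T) (P p.2 \ T)
            = (((P p.1).card : ℝ) * ((P p.2).card : ℝ) * indPair c (P p.1) (P p.2)
              - ((P p.1 \ T).card : ℝ) * ((P p.2 \ T).card : ℝ)
                * indPair c (P p.1 \ T) (P p.2 \ T)) / N := by ring
        rw [heq, abs_div, abs_of_nonneg hN0]
        exact div_le_div_right_nonneg hkey hN0
    _ = 3 * (∑ p ∈ univ.filter (fun p : Fin k × Fin k => p.1 < p.2),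
          (((P p.1).card:ℝ) * ((P p.2).card:ℝ)
            - ((P p.1 \ T).card:ℝ) * ((P p.2 \ T).card:ℝ))) / N := by
        rw [Finset.mul_sum, Finset.sum_div]
    _ ≤ 3 * ((T.card : ℝ) * (Fintype.card V)) / N := by
        have hs := sum_card_diff P hdis T
        rcases eq_or_lt_of_le hN0 with h | h
        · rw [← h, div_zero, div_zero]
        · apply div_le_div_right_nonneg _ hN0
          linarith

end partlemmas

lemma indPart_pad {V C : Type*} [Fintype V] [DecidableEq V] [Fintype C] [DecidableEq C]
    (c : V → V → C) {k m : ℕ} (hkm : k ≤ m) (P : Fin k → Finset V) :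
    indPart c (fun i : Fin m => padPart P (i : ℕ)) = indPart c P := by
  unfold indPart
  have hpadval : ∀ (i : Fin k), padPart P ((Fin.castLE hkm i : Fin m) : ℕ) = P i := by
    intro i
    simp only [padPart, Fin.coe_castLE, i.isLt, dif_pos, Fin.eta]
  rw [← Finset.sum_subset
    (show univ.filter (fun p : Fin m × Fin m => p.1 < p.2 ∧ (p.2 : ℕ) < k) ⊆
        univ.filter (fun p : Fin m × Fin m => p.1 < p.2) from
      fun p hp => mem_filter.mpr ⟨mem_univ _, (mem_filter.mp hp).2.1⟩)
    (by
      intro p hp hps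
      simp only [mem_filter, mem_univ, true_and, not_and, not_lt] at hp hps
      have h2 : ¬ ((p.2 : ℕ) < k) := not_lt.mpr (hps hp)
      have hemp : padPart P ((p.2 : Fin m) : ℕ) = ∅ := dif_neg h2
      simp [hemp])]
  refine (Finset.sum_bij
    (fun (p : Fin k × Fin k) _ => ((Fin.castLE hkm p.1, Fin.castLE hkm p.2) : Fin m × Fin m))
    ?_ ?_ ?_ ?_).symm
  · intro p hp
    simp only [mem_filter, mem_univ, true_and] at hp ⊢
    exact ⟨by simpa using hp, by simpa using p.2.isLt⟩
  · intro p1 h1 p2 h2 heq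
    have e1 : Fin.castLE hkm p1.1 = Fin.castLE hkm p2.1 := congrArg Prod.fst heq
    have e2 : Fin.castLE hkm p1.2 = Fin.castLE hkm p2.2 := congrArg Prod.snd heq
    exact Prod.ext (Fin.castLE_injective hkm e1) (Fin.castLE_injective hkm e2)
  · intro b hb
    simp only [mem_filter, mem_univ, true_and] at hb
    obtain ⟨hlt, hk⟩ := hb
    have h1k : (b.1 : ℕ) < k := lt_trans hlt hk
    refine ⟨(⟨b.1, h1k⟩, ⟨b.2, hk⟩), ?_, ?_⟩
    · simp only [mem_filter, mem_univ, true_and]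
      exact hlt
    · ext <;> simp
  · intro p hp
    simp only [hpadval]


/-- for every `ε > 0` there is `δ > 0` such that any two `δ`-close partitions
of a colored complete graph have indexes within `ε` of each other. -/
theorem close_partitions_index (ε : ℝ) (hε : 0 < ε) :
    ∃ δ : ℝ, 0 < δ ∧
      ∀ (V C : Type) [Fintype V] [DecidableEq V] [Fintype C] [DecidableEq C]
        (c : V → V → C) (k l : ℕ) (P : Fin k → Finset V) (Q : Fin l → Finset V),
        IsPartition P → IsPartition Q → DeltaClose δ P Q →
        |indPart c P - indPart c Q| ≤ ε := by
  refine ⟨ε / 24, by positivity, ?_⟩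
  intro V C _ _ _ _ c k l P Q hP hQ hclose
  obtain ⟨T, hT, hagree⟩ := hclose
  rcases le_or_gt 2 (Fintype.card V) with hn | hn
  · -- main case
    have hmid : indPart c (fun i : Fin k => P i \ T) = indPart c (fun i : Fin l => Q i \ T) := by
      have h1 : ∀ j : ℕ, padPart (fun i : Fin k => P i \ T) j = padPart P j \ T := by
        intro j; unfold padPart; split <;> simp
      have h2 : ∀ j : ℕ, padPart (fun i : Fin l => Q i \ T) j = padPart Q j \ T := by
        intro j; unfold padPart; split <;> simp
      have hP' : (fun i : Fin (max k l) => padPart (fun i : Fin k => P i \ T) (i : ℕ)) =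
          (fun i : Fin (max k l) => padPart (fun i : Fin l => Q i \ T) (i : ℕ)) := by
        funext i
        rw [h1, h2, hagree]
      calc indPart c (fun i : Fin k => P i \ T)
          = indPart c (fun i : Fin (max k l) =>
              padPart (fun i : Fin k => P i \ T) (i : ℕ)) :=
            (indPart_pad c (le_max_left k l) _).symm
        _ = indPart c (fun i : Fin (max k l) =>
              padPart (fun i : Fin l => Q i \ T) (i : ℕ)) := by rw [hP']
        _ = indPart c (fun i : Fin l => Q i \ T) := indPart_pad c (le_max_right k l) _
    have h1 := indPart_sdiff c P hP.1 T
    have h2 := indPart_sdiff c Q hQ.1 T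
    set n : ℝ := (Fintype.card V : ℝ) with hn_def
    set N : ℝ := (((Fintype.card V).choose 2 : ℕ) : ℝ) with hN_def
    have hn2 : (2:ℝ) ≤ n := by rw [hn_def]; exact_mod_cast hn
    have hNval : N = n * (n - 1) / 2 := by
      rw [hN_def, hn_def]; exact_mod_cast Nat.cast_choose_two ℝ (Fintype.card V)
    have hN4 : n ^ 2 / 4 ≤ N := by rw [hNval]; nlinarith
    have hNpos : (0:ℝ) < N := by nlinarith
    have hT0 : (0:ℝ) ≤ (T.card : ℝ) := Nat.cast_nonneg _
    have hbound : 3 * ((T.card : ℝ) * n) / N ≤ ε / 2 := by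
      rw [div_le_iff₀ hNpos]
      nlinarith [mul_le_mul_of_nonneg_right hT (by linarith : (0:ℝ) ≤ n),
        mul_le_mul_of_nonneg_left hN4 (by linarith : (0:ℝ) ≤ ε / 2)]
    have hsplit : indPart c P - indPart c Q =
        (indPart c P - indPart c (fun i : Fin k => P i \ T))
          + (indPart c (fun i : Fin l => Q i \ T) - indPart c Q) := by
      rw [← hmid]; ring
    calc |indPart c P - indPart c Q|
        ≤ |indPart c P - indPart c (fun i : Fin k => P i \ T)|
          + |indPart c (fun i : Fin l => Q i \ T) - indPart c Q| := by
          rw [hsplit]; exact abs_add_le _ _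
      _ ≤ ε / 2 + ε / 2 := by
          apply add_le_add
          · exact le_trans h1 hbound
          · rw [abs_sub_comm]
            exact le_trans h2 hbound
      _ = ε := by ring
  · -- degenerate case: fewer than two vertices
    have hch : (Fintype.card V).choose 2 = 0 := Nat.choose_eq_zero_of_lt hn
    have hz : ∀ {j : ℕ} (R : Fin j → Finset V), indPart c R = 0 := by
      intro j R
      unfold indPart
      rw [hch]
      simp
    rw [hz P, hz Q]
    simp only [sub_zero, abs_zero]
    linarith
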